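/- Let A ⊆ 𝔸ⁿ be a variety whose irreducible components are affine d-planes. For each J ⊆ {1,…,n} with #J = d let A_J be the union of those components of A with minimal free variables {X_j : j ∈ J}. If for each J the set E(A_J) of d-planes in D(A_J) consists of exactly m_J d-planes all parallel to ⊕_{j∈J} ℕe_j (m_J = number of components of A_J), then E(A) = ⋃_J E(A_J); in particular the number of d-planes in D(A) equals the total number of irreducible components of A. -/

import Mathlib

open MvPolynomial

/-- `β` is the leading exponent of `f` with respect to the monomial order `m`. -/
def IsLeadExp {σ : Type*} {k : Type*} [CommSemiring k] (m : MonomialOrder σ)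
    (f : MvPolynomial σ k) (β : σ →₀ ℕ) : Prop :=
  β ∈ f.support ∧ ∀ α ∈ f.support, α ≠ β → m.toSyn α < m.toSyn β

/-- `C(I)`: the set of leading exponents of nonzero elements of the ideal `I`. -/
def expC {σ : Type*} {k : Type*} [CommSemiring k] (m : MonomialOrder σ)
    (I : Ideal (MvPolynomial σ k)) : Set (σ →₀ ℕ) :=
  {β | ∃ f ∈ I, IsLeadExp m f β}

/-- `D(I)`: the standard set (set of exponents of standard monomials) of the ideal `I`. -/
def expD {σ : Type*} {k : Type*} [CommSemiring k] (m : MonomialOrder σ)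
    (I : Ideal (MvPolynomial σ k)) : Set (σ →₀ ℕ) :=
  (expC m I)ᶜ

/-- `{X_j : j ∈ J}` is a set of free variables of `A′ ⊆ kⁿ`: for every choice of values of
the coordinates in `J` there is a unique point of `A′` with these coordinates. -/
def IsFreeVars {k : Type*} [Field k] {n : ℕ} (A' : Set (Fin n → k)) (J : Finset (Fin n)) :
    Prop :=
  ∀ v : Fin n → k, ∃! x, x ∈ A' ∧ ∀ j ∈ J, x j = v j

/-- `{X_j : j ∈ J}` is the set of *minimal* free variables of `A′`: it is a set of free
variables, and no `j ∈ J` can be replaced by a smaller index `i ∉ J` so that the result is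
still a set of free variables. -/
def IsMinFreeVars {k : Type*} [Field k] {n : ℕ} (A' : Set (Fin n → k)) (J : Finset (Fin n)) :
    Prop :=
  IsFreeVars A' J ∧
    ∀ j ∈ J, ∀ i ∉ J, i < j → ¬ IsFreeVars A' (insert i (J.erase j))

/-- `A′` is a `d`-dimensional affine subspace of `kⁿ`. -/
def IsAffineDPlane {k : Type*} [Field k] {n : ℕ} (d : ℕ) (A' : Set (Fin n → k)) : Prop :=
  ∃ S : AffineSubspace k (Fin n → k),
    A' = (S : Set (Fin n → k)) ∧ A'.Nonempty ∧ Module.finrank k S.direction = d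

/-- The `d`-plane `γ + ⊕_{j∈J} ℕe_j` in `ℕⁿ` (for `γ` vanishing on `J`): the set of
exponents agreeing with `γ` outside `J`. -/
def dPlane {n : ℕ} (γ : Fin n →₀ ℕ) (J : Finset (Fin n)) : Set (Fin n →₀ ℕ) :=
  {β | ∀ i ∉ J, β i = γ i}

/-- The parameters `(J, γ)` of the `d`-planes contained in `δ`. -/
def planesIn {n : ℕ} (d : ℕ) (δ : Set (Fin n →₀ ℕ)) :
    Set (Finset (Fin n) × (Fin n →₀ ℕ)) :=
  {Jγ | Jγ.1.card = d ∧ (∀ j ∈ Jγ.1, Jγ.2 j = 0) ∧ dPlane Jγ.2 Jγ.1 ⊆ δ}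

/-- `E(δ)`: the union of all `d`-planes contained in `δ`. -/
def Eset {n : ℕ} (d : ℕ) (δ : Set (Fin n →₀ ℕ)) : Set (Fin n →₀ ℕ) :=
  ⋃ Jγ ∈ planesIn d δ, dPlane Jγ.2 Jγ.1

section Aux
set_option maxHeartbeats 2000000
variable {σ : Type*} {k : Type*} [Field k] {m : MonomialOrder σ}

lemma IsLeadExp.le {f : MvPolynomial σ k} {β : σ →₀ ℕ} (hf : IsLeadExp m f β)
    {α : σ →₀ ℕ} (hα : α ∈ f.support) : m.toSyn α ≤ m.toSyn β := by
  rcases eq_or_ne α β with rfl | h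
  · exact le_rfl
  · exact (hf.2 α hα h).le

lemma isLeadExp_mul {f g : MvPolynomial σ k} {β γ : σ →₀ ℕ}
    (hf : IsLeadExp m f β) (hg : IsLeadExp m g γ) : IsLeadExp m (f * g) (β + γ) := by
  classical
  have hco : coeff (β + γ) (f * g) = coeff β f * coeff γ g := by
    rw [coeff_mul]
    apply Finset.sum_eq_single_of_mem (β, γ) (Finset.HasAntidiagonal.mem_antidiagonal.mpr rfl)
    · rintro ⟨a, b⟩ hx hne
      rw [Finset.HasAntidiagonal.mem_antidiagonal] at hx
      by_cases ha : a ∈ f.support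
      · by_cases hb : b ∈ g.support
        · have hane : a ≠ β := fun h => hne (by
            rw [h] at hx
            exact Prod.ext h (add_left_cancel hx))
          have hlt : m.toSyn (a + b) < m.toSyn (β + γ) := by
            rw [map_add, map_add]
            exact add_lt_add_of_lt_of_le (hf.2 a ha hane) (hg.le hb)
          rw [hx] at hlt
          exact absurd hlt (lt_irrefl _)
        · rw [notMem_support_iff.mp hb, mul_zero]
      · rw [notMem_support_iff.mp ha, zero_mul]
  constructor
  · rw [mem_support_iff, hco]
    exact mul_ne_zero (mem_support_iff.mp hf.1) (mem_support_iff.mp hg.1)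
  · intro α hα hne
    obtain ⟨a, ha, b, hb, rfl⟩ := Finset.mem_add.mp (support_mul f g hα)
    have h1 : m.toSyn (a + b) ≤ m.toSyn (β + γ) := by
      rw [map_add, map_add]
      exact add_le_add (hf.le ha) (hg.le hb)
    exact lt_of_le_of_ne h1 (fun h => hne (m.toSyn.injective h))

lemma isLeadExp_one : IsLeadExp m (1 : MvPolynomial σ k) 0 := by
  classical
  constructor
  · rw [mem_support_iff]
    simp
  · intro α hα hne
    rw [mem_support_iff, ← C_1, coeff_C, if_neg (fun h => hne h.symm)] at hα
    exact absurd rfl hα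

lemma isLeadExp_prod {ι : Type*} (s : Finset ι) (g : ι → MvPolynomial σ k)
    (β : ι → (σ →₀ ℕ)) (h : ∀ c ∈ s, IsLeadExp m (g c) (β c)) :
    IsLeadExp m (∏ c ∈ s, g c) (∑ c ∈ s, β c) := by
  classical
  induction s using Finset.cons_induction with
  | empty => simpa using isLeadExp_one
  | cons a s ha ih =>
    rw [Finset.prod_cons, Finset.sum_cons]
    exact isLeadExp_mul (h a (Finset.mem_cons_self a s))
      (ih fun c hc => h c (Finset.mem_cons_of_mem hc))

variable {k : Type*} [Field k] {n : ℕ}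

/-- On an affine plane with free variables `J`, every coordinate is an affine function of
the coordinates in `J`. -/
lemma exists_affine_graph {d : ℕ} {P : Set (Fin n → k)} (haff : IsAffineDPlane d P)
    {J : Finset (Fin n)} (hfree : IsFreeVars P J) (i : Fin n) :
    ∃ c₀ : k, ∃ a : Fin n → k, ∀ x ∈ P, x i = c₀ + ∑ j ∈ J, a j * x j := by
  classical
  obtain ⟨S, hSP, hne, -⟩ := haff
  obtain ⟨p, hp⟩ := hne
  have hpS : p ∈ S := by rw [hSP] at hp; exact hp
  set V := S.direction with hV
  let πmap : (Fin n → k) →ₗ[k] (J → k) := LinearMap.pi (fun j : J => LinearMap.proj (j : Fin n))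
  let πV : V →ₗ[k] (J → k) := πmap.comp V.subtype
  have hinj : Function.Injective πV := by
    intro v w hvw
    have hv : (v : Fin n → k) + p ∈ P := by
      rw [hSP]
      have := AffineSubspace.vadd_mem_of_mem_direction v.2 hpS
      rwa [vadd_eq_add] at this
    have hw : (w : Fin n → k) + p ∈ P := by
      rw [hSP]
      have := AffineSubspace.vadd_mem_of_mem_direction w.2 hpS
      rwa [vadd_eq_add] at this
    obtain ⟨x, -, hxu⟩ := hfree ((v : Fin n → k) + p)
    have h1 : (v : Fin n → k) + p = x := hxu _ ⟨hv, fun j _ => rfl⟩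
    have h2 : (w : Fin n → k) + p = x := hxu _ ⟨hw, fun j hj => by
      have h3 : πV v ⟨j, hj⟩ = πV w ⟨j, hj⟩ := congrFun hvw ⟨j, hj⟩
      have h4 : (v : Fin n → k) j = (w : Fin n → k) j := h3
      show (w : Fin n → k) j + p j = (v : Fin n → k) j + p j
      rw [h4]⟩
    have : (v : Fin n → k) = (w : Fin n → k) := by
      have := h1.trans h2.symm
      exact add_right_cancel this
    exact Subtype.ext this
  have hsurj : Function.Surjective πV := by
    intro u
    obtain ⟨x, ⟨hxP, hxJ⟩, -⟩ := hfree (fun i' => if h : i' ∈ J then u ⟨i', h⟩ + p i' else 0)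
    have hxS : x ∈ S := by rw [hSP] at hxP; exact hxP
    refine ⟨⟨x - p, ?_⟩, ?_⟩
    · have := AffineSubspace.vsub_mem_direction hxS hpS
      rwa [vsub_eq_sub] at this
    · funext j
      have := hxJ (j : Fin n) j.2
      rw [dif_pos j.2] at this
      simp only [πV, πmap, LinearMap.comp_apply, LinearMap.pi_apply, LinearMap.proj_apply,
        Submodule.subtype_apply]
      simp only [Pi.sub_apply, this]
      ring
  let e : V ≃ₗ[k] (J → k) := LinearEquiv.ofBijective πV ⟨hinj, hsurj⟩
  let L : (J → k) →ₗ[k] k := (LinearMap.proj i).comp (V.subtype.comp e.symm.toLinearMap)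
  let b : J → k := fun j => L (Pi.single j 1)
  let a : Fin n → k := fun i' => if h : i' ∈ J then b ⟨i', h⟩ else 0
  refine ⟨p i - ∑ j ∈ J, a j * p j, a, ?_⟩
  intro x hxP
  have hxS : x ∈ S := by rw [hSP] at hxP; exact hxP
  have hw : x - p ∈ V := by
    have := AffineSubspace.vsub_mem_direction hxS hpS
    rwa [vsub_eq_sub] at this
  set w : V := ⟨x - p, hw⟩ with hwdef
  have hL : L (πV w) = x i - p i := by
    have h1 : e.symm (πV w) = w := by
      have : πV w = e w := rfl
      rw [this, LinearEquiv.symm_apply_apply]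
    simp only [L, LinearMap.comp_apply, LinearEquiv.coe_toLinearMap, h1,
      Submodule.subtype_apply, LinearMap.proj_apply]
    rfl
  have hexp : L (πV w) = ∑ j : J, (x (j : Fin n) - p (j : Fin n)) * b j := by
    have hu : πV w = ∑ j : J, (x (j : Fin n) - p (j : Fin n)) • (Pi.single (M := fun _ : J => k) j 1) := by
      conv_lhs => rw [← Finset.univ_sum_single (πV w)]
      apply Finset.sum_congr rfl
      intro j _
      have hj : πV w j = x (j : Fin n) - p (j : Fin n) := rfl
      rw [hj, ← Pi.single_smul', smul_eq_mul, mul_one]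
    rw [hu, map_sum]
    apply Finset.sum_congr rfl
    intro j _
    rw [map_smul, smul_eq_mul]
  have hsum : ∑ j : J, (x (j : Fin n) - p (j : Fin n)) * b j
      = ∑ j ∈ J, (x j - p j) * a j := by
    rw [← Finset.sum_coe_sort J (fun j => (x j - p j) * a j)]
    apply Finset.sum_congr rfl
    intro j _
    simp only [a, dif_pos j.2]
  have : x i - p i = ∑ j ∈ J, (x j - p j) * a j := by
    rw [← hsum, ← hexp, hL]
  have hexpand : ∑ j ∈ J, (x j - p j) * a j = (∑ j ∈ J, a j * x j) - ∑ j ∈ J, a j * p j := by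
    rw [← Finset.sum_sub_distrib]
    apply Finset.sum_congr rfl
    intro j _
    ring
  rw [hexpand] at this
  linear_combination this

lemma isFreeVars_swap {P : Set (Fin n → k)} {J : Finset (Fin n)} (hfree : IsFreeVars P J)
    {c₀ : k} {a : Fin n → k} {i : Fin n}
    (hrel : ∀ x ∈ P, x i = c₀ + ∑ j ∈ J, a j * x j)
    {j' : Fin n} (hi : i ∉ J) (hj' : j' ∈ J) (ha : a j' ≠ 0) :
    IsFreeVars P (insert i (J.erase j')) := by
  classical
  intro v
  set tv : k := (v i - c₀ - ∑ j ∈ J.erase j', a j * v j) / a j' with htv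
  set t : Fin n → k := Function.update v j' tv with ht
  obtain ⟨x, ⟨hxP, hxJ⟩, hxu⟩ := hfree t
  have htj : ∀ j ∈ J.erase j', t j = v j := by
    intro j hj
    rw [ht, Function.update_of_ne (Finset.ne_of_mem_erase hj)]
  have hyrel : ∀ y, y ∈ P → (∀ j ∈ J.erase j', y j = v j) →
      y i = c₀ + a j' * y j' + ∑ j ∈ J.erase j', a j * v j := by
    intro y hyP hyE
    rw [hrel y hyP, ← Finset.add_sum_erase J (fun j => a j * y j) hj',
      Finset.sum_congr rfl (fun j hj => by rw [hyE j hj])]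
    ring
  have hkey : c₀ + a j' * tv + ∑ j ∈ J.erase j', a j * v j = v i := by
    rw [htv]
    field_simp
    ring
  have hxE : ∀ j ∈ J.erase j', x j = v j := fun j hj => by
    rw [hxJ j (Finset.mem_of_mem_erase hj), htj j hj]
  have hxj' : x j' = tv := by rw [hxJ j' hj', ht, Function.update_self]
  refine ⟨x, ⟨hxP, ?_⟩, ?_⟩
  · intro j hj
    rcases Finset.mem_insert.mp hj with rfl | hj
    · rw [hyrel x hxP hxE, hxj', hkey]
    · exact hxE j hj
  · rintro y ⟨hyP, hyI⟩
    apply hxu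
    refine ⟨hyP, ?_⟩
    have hyE : ∀ j ∈ J.erase j', y j = v j := fun j hj =>
      hyI j (Finset.mem_insert_of_mem hj)
    have hyi : y i = v i := hyI i (Finset.mem_insert_self _ _)
    have hy' : y j' = tv := by
      have h1 := hyrel y hyP hyE
      rw [hyi] at h1
      rw [htv, eq_div_iff ha]
      linear_combination h1.symm
    intro j hj
    rcases eq_or_ne j j' with rfl | hne
    · rw [hy', ht, Function.update_self]
    · rw [hyE j (Finset.mem_erase.mpr ⟨hne, hj⟩), htj j (Finset.mem_erase.mpr ⟨hne, hj⟩)]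

lemma exists_isLeadExp_single {d : ℕ} (m : MonomialOrder (Fin n))
    (hvar : ∀ i j : Fin n, i < j →
      m.toSyn (Finsupp.single i 1) < m.toSyn (Finsupp.single j 1))
    {P : Set (Fin n → k)} (haff : IsAffineDPlane d P) {Jc : Finset (Fin n)}
    (hmin : IsMinFreeVars P Jc) {j : Fin n} (hj : j ∉ Jc) :
    ∃ g ∈ MvPolynomial.vanishingIdeal k P, IsLeadExp m g (Finsupp.single j 1) := by
  classical
  obtain ⟨c₀, a, hrel⟩ := exists_affine_graph haff hmin.1 j
  set g : MvPolynomial (Fin n) k := X j - C c₀ - ∑ j'' ∈ Jc, C (a j'') * X j'' with hg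
  have hβ0 : (Finsupp.single j 1 : Fin n →₀ ℕ) ≠ 0 := fun h => one_ne_zero (Finsupp.single_eq_zero.mp h)
  have hmem : g ∈ MvPolynomial.vanishingIdeal k P := by
    rw [mem_vanishingIdeal_iff]
    intro x hx
    rw [hg]
    simp only [map_sub, map_sum, map_mul, aeval_C, aeval_X, Algebra.algebraMap_self, RingHom.id_apply]
    rw [hrel x hx]
    ring
  have hco : ∀ α, coeff α g = (if Finsupp.single j 1 = α then (1:k) else 0)
      - (if 0 = α then c₀ else 0)
      - ∑ j'' ∈ Jc, (if Finsupp.single j'' 1 = α then a j'' else 0) := by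
    intro α
    rw [hg]
    simp only [coeff_sub, coeff_sum, coeff_X', coeff_C, C_mul_X_eq_monomial, coeff_monomial]
  have hcoβ : coeff (Finsupp.single j 1) g = 1 := by
    rw [hco]
    rw [if_pos rfl, if_neg (fun h => hβ0 h.symm), Finset.sum_eq_zero, sub_zero, sub_zero]
    intro j'' hj''
    rw [if_neg]
    intro h
    exact hj (((Finsupp.single_left_inj one_ne_zero).mp h) ▸ hj'')
  refine ⟨g, hmem, ⟨mem_support_iff.mpr (by rw [hcoβ]; exact one_ne_zero), ?_⟩⟩
  intro α hα hne
  by_cases h0 : α = 0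
  · subst h0
    rw [map_zero]
    refine lt_of_le_of_ne ?_ ?_
    · rw [← m.bot_eq_zero]; exact bot_le
    · intro h
      exact hβ0 (m.toSyn.injective (by rw [← h, map_zero]))
  · have hex : ∃ j'' ∈ Jc, Finsupp.single j'' 1 = α ∧ a j'' ≠ 0 := by
      by_contra hcon
      push_neg at hcon
      apply mem_support_iff.mp hα
      rw [hco α, if_neg (fun h => hne h.symm), if_neg (fun h => h0 h.symm),
        Finset.sum_eq_zero, sub_zero, sub_zero]
      intro j'' hj''
      by_cases heq : Finsupp.single j'' 1 = α
      · rw [if_pos heq, hcon j'' hj'' heq]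
      · rw [if_neg heq]
    obtain ⟨j'', hj''c, rfl, ha''⟩ := hex
    have hjj : j'' ≠ j := fun h => hj (h ▸ hj''c)
    rcases lt_or_gt_of_ne hjj with hlt | hgt
    · exact hvar j'' j hlt
    · exact absurd (isFreeVars_swap hmin.1 hrel hj hj''c ha'')
        (hmin.2 j'' hj''c j hj hgt)

end Aux


lemma Eset_subset {n : ℕ} (d : ℕ) (δ : Set (Fin n →₀ ℕ)) : Eset d δ ⊆ δ := by
  apply Set.iUnion₂_subset
  intro Jγ hJγ
  exact hJγ.2.2

lemma key_plane_subset {k : Type*} [Field k] {n d mm : ℕ}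
    (m : MonomialOrder (Fin n))
    (hvar : ∀ i j : Fin n, i < j →
      m.toSyn (Finsupp.single i 1) < m.toSyn (Finsupp.single j 1))
    (P : Fin mm → Set (Fin n → k)) (Jc : Fin mm → Finset (Fin n))
    (hP : ∀ c, IsAffineDPlane d (P c) ∧ (Jc c).card = d ∧ IsMinFreeVars (P c) (Jc c))
    (A : Set (Fin n → k)) (hA : A = ⋃ c, P c)
    (AJ : Finset (Fin n) → Set (Fin n → k))
    (hAJ : ∀ J, AJ J = ⋃ c ∈ {c | Jc c = J}, P c)
    {J : Finset (Fin n)} {γ : Fin n →₀ ℕ}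
    (hmem : (J, γ) ∈ planesIn d (expD m (MvPolynomial.vanishingIdeal k A))) :
    dPlane γ J ⊆ expD m (MvPolynomial.vanishingIdeal k (AJ J)) := by
  classical
  obtain ⟨hJd, hγJ, hsub⟩ := hmem
  intro β hβ
  by_contra hβC
  have hβC' : β ∈ expC m (MvPolynomial.vanishingIdeal k (AJ J)) := not_not.mp hβC
  obtain ⟨f, hfI, hfl⟩ := hβC'
  set S : Finset (Fin mm) := Finset.univ.filter (fun c => Jc c ≠ J) with hS
  have hchoice : ∀ c : Fin mm, c ∈ S → ∃ jc : Fin n, jc ∈ J ∧ jc ∉ Jc c := by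
    intro c hc
    have hne : Jc c ≠ J := (Finset.mem_filter.mp hc).2
    by_contra hcon
    push_neg at hcon
    exact hne (Finset.eq_of_subset_of_card_le (fun x hx => hcon x hx)
      (le_of_eq ((hP c).2.1.trans hJd.symm))).symm
  choose jf hjfJ hjfc using hchoice
  have hgc : ∀ (c : Fin mm) (hc : c ∈ S), ∃ g ∈ MvPolynomial.vanishingIdeal k (P c),
      IsLeadExp m g (Finsupp.single (jf c hc) 1) := fun c hc =>
    exists_isLeadExp_single m hvar (hP c).1 (hP c).2.2 (hjfc c hc)
  choose g hgI hgl using hgc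
  set h : MvPolynomial (Fin n) k := ∏ c ∈ S.attach, g c.1 c.2 with hh
  set σs : Fin n →₀ ℕ := ∑ c ∈ S.attach, Finsupp.single (jf c.1 c.2) 1 with hσs
  have hhl : IsLeadExp m h σs := isLeadExp_prod _ _ _ (fun c _ => hgl c.1 c.2)
  have hfh : f * h ∈ MvPolynomial.vanishingIdeal k A := by
    rw [MvPolynomial.mem_vanishingIdeal_iff]
    intro x hx
    rw [hA] at hx
    obtain ⟨c, hc⟩ : ∃ c, x ∈ P c := by simpa using hx
    rw [map_mul]
    by_cases hcJ : Jc c = J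
    · have hxAJ : x ∈ AJ J := by
        rw [hAJ]
        exact Set.mem_biUnion hcJ hc
      rw [MvPolynomial.mem_vanishingIdeal_iff] at hfI
      rw [hfI x hxAJ, zero_mul]
    · have hcS : c ∈ S := Finset.mem_filter.mpr ⟨Finset.mem_univ c, hcJ⟩
      have hzero : MvPolynomial.eval x h = 0 := by
        rw [hh, map_prod]
        apply Finset.prod_eq_zero (Finset.mem_attach S ⟨c, hcS⟩)
        exact (MvPolynomial.mem_vanishingIdeal_iff.mp (hgI c hcS)) x hc
      rw [show (aeval x) h = 0 from hzero, mul_zero]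
  have hlead : IsLeadExp m (f * h) (β + σs) := isLeadExp_mul hfl hhl
  have hmemC : β + σs ∈ expC m (MvPolynomial.vanishingIdeal k A) := ⟨f * h, hfh, hlead⟩
  have hmemD : β + σs ∈ expD m (MvPolynomial.vanishingIdeal k A) := by
    apply hsub
    intro i hi
    have hσ : σs i = 0 := by
      rw [hσs, Finsupp.finset_sum_apply]
      apply Finset.sum_eq_zero
      intro c _
      rw [Finsupp.single_apply, if_neg]
      intro hh'
      exact hi (hh' ▸ hjfJ c.1 c.2)
    show (β + σs) i = γ i
    rw [Finsupp.add_apply, hσ, add_zero]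
    exact hβ i hi
  exact hmemD hmemC


/-- Decomposition lemma: if `A` is a union of affine `d`-planes, `A_J` the union of those
components with minimal free variables `{X_j : j ∈ J}`, and if each `E(A_J)` consists of
exactly `m_J` `d`-planes parallel to `⊕_{j∈J} ℕe_j`, then `E(A) = ⋃_J E(A_J)`; in
particular the number of `d`-planes in `D(A)` equals the total number of components. -/

theorem Eset_union_of_components {k : Type*} [Field k] {n d mm : ℕ}
    (m : MonomialOrder (Fin n))
    (hvar : ∀ i j : Fin n, i < j →
      m.toSyn (Finsupp.single i 1) < m.toSyn (Finsupp.single j 1))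
    (P : Fin mm → Set (Fin n → k)) (Jc : Fin mm → Finset (Fin n))
    (hP : ∀ c, IsAffineDPlane d (P c) ∧ (Jc c).card = d ∧ IsMinFreeVars (P c) (Jc c))
    (hdist : ∀ c c', P c = P c' → c = c')
    (A : Set (Fin n → k)) (hA : A = ⋃ c, P c)
    (AJ : Finset (Fin n) → Set (Fin n → k))
    (hAJ : ∀ J, AJ J = ⋃ c ∈ {c | Jc c = J}, P c)
    (hEJ : ∀ J : Finset (Fin n), J.card = d →
      ∃ Γ : Finset (Fin n →₀ ℕ),
        Γ.card = (Finset.univ.filter (fun c => Jc c = J)).card ∧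
        (∀ γ ∈ Γ, ∀ j ∈ J, γ j = 0) ∧
        Eset d (expD m (MvPolynomial.vanishingIdeal k (AJ J))) = ⋃ γ ∈ Γ, dPlane γ J) :
    (Eset d (expD m (MvPolynomial.vanishingIdeal k A)) =
        ⋃ J ∈ {J : Finset (Fin n) | J.card = d},
          Eset d (expD m (MvPolynomial.vanishingIdeal k (AJ J)))) ∧
      (planesIn d (expD m (MvPolynomial.vanishingIdeal k A))).ncard = mm := by
  classical
  have hAJA : ∀ J, AJ J ⊆ A := by
    intro J x hx
    rw [hAJ J] at hx
    obtain ⟨c, -, hc⟩ := Set.mem_iUnion₂.mp hx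
    rw [hA]
    exact Set.mem_iUnion.mpr ⟨c, hc⟩
  have hCsub : ∀ J, expC m (MvPolynomial.vanishingIdeal k A)
      ⊆ expC m (MvPolynomial.vanishingIdeal k (AJ J)) := by
    intro J β ⟨f, hf, hfl⟩
    exact ⟨f, MvPolynomial.vanishingIdeal_anti_mono (hAJA J) hf, hfl⟩
  have hDsub : ∀ J, expD m (MvPolynomial.vanishingIdeal k (AJ J))
      ⊆ expD m (MvPolynomial.vanishingIdeal k A) :=
    fun J => Set.compl_subset_compl.mpr (hCsub J)
  have hkey : ∀ J γ, (J, γ) ∈ planesIn d (expD m (MvPolynomial.vanishingIdeal k A)) →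
      dPlane γ J ⊆ expD m (MvPolynomial.vanishingIdeal k (AJ J)) :=
    fun J γ hm => key_plane_subset m hvar P Jc hP A hA AJ hAJ hm
  constructor
  · apply Set.Subset.antisymm
    · intro x hx
      obtain ⟨⟨J, γ⟩, hJγ, hxp⟩ := Set.mem_iUnion₂.mp hx
      have hmemJ : (J, γ) ∈ planesIn d (expD m (MvPolynomial.vanishingIdeal k (AJ J))) :=
        ⟨hJγ.1, hJγ.2.1, hkey J γ hJγ⟩
      apply Set.mem_biUnion (show J ∈ {J : Finset (Fin n) | J.card = d} from hJγ.1)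
      exact Set.mem_biUnion hmemJ hxp
    · intro x hx
      obtain ⟨J, hJd, hx⟩ := Set.mem_iUnion₂.mp hx
      obtain ⟨⟨J', γ'⟩, hJ'γ', hxp⟩ := Set.mem_iUnion₂.mp hx
      have : (J', γ') ∈ planesIn d (expD m (MvPolynomial.vanishingIdeal k A)) :=
        ⟨hJ'γ'.1, hJ'γ'.2.1, hJ'γ'.2.2.trans (hDsub J)⟩
      exact Set.mem_biUnion this hxp
  · choose Γf hΓcard hΓ0 hΓE using hEJ
    set Γ' : Finset (Fin n) → Finset (Fin n →₀ ℕ) :=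
      fun J => if h : J.card = d then Γf J h else ∅ with hΓ'
    set JS : Finset (Finset (Fin n)) := Finset.univ.filter (fun J => J.card = d) with hJS
    set F : Finset (Finset (Fin n) × (Fin n →₀ ℕ)) :=
      JS.biUnion (fun J => (Γ' J).image (fun γ => (J, γ))) with hF
    have hset : planesIn d (expD m (MvPolynomial.vanishingIdeal k A)) = ↑F := by
      apply Set.Subset.antisymm
      · rintro ⟨J, γ⟩ hmem
        have hJd : J.card = d := hmem.1
        have hγJ : ∀ j ∈ J, γ j = 0 := hmem.2.1
        have hsub2 : dPlane γ J ⊆ Eset d (expD m (MvPolynomial.vanishingIdeal k (AJ J))) := by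
          apply Set.subset_iUnion₂ (s := fun (Jγ : Finset (Fin n) × (Fin n →₀ ℕ)) _ =>
            dPlane Jγ.2 Jγ.1) ((J, γ) : Finset (Fin n) × (Fin n →₀ ℕ))
            (⟨hJd, hγJ, hkey J γ hmem⟩ : (J, γ) ∈ planesIn d
              (expD m (MvPolynomial.vanishingIdeal k (AJ J))))
        rw [hΓE J hJd] at hsub2
        have hγmem : γ ∈ dPlane γ J := fun i _ => rfl
        obtain ⟨γ', hγ', hγd⟩ := Set.mem_iUnion₂.mp (hsub2 hγmem)
        have hγeq : γ = γ' := by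
          ext i
          by_cases hi : i ∈ J
          · rw [hγJ i hi, hΓ0 J hJd γ' hγ' i hi]
          · exact hγd i hi
        have hJmem : J ∈ JS := Finset.mem_filter.mpr ⟨Finset.mem_univ _, hJd⟩
        have : γ ∈ Γ' J := by
          show γ ∈ if h : J.card = d then Γf J h else ∅
          rw [dif_pos hJd]
          exact hγeq ▸ hγ'
        exact Finset.mem_coe.mpr (Finset.mem_biUnion.mpr
          ⟨J, hJmem, Finset.mem_image.mpr ⟨γ, this, rfl⟩⟩)
      · rintro ⟨J, γ⟩ hmem
        obtain ⟨J', hJ', himg⟩ := Finset.mem_biUnion.mp (Finset.mem_coe.mp hmem)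
        obtain ⟨γ'', hγ'', heq⟩ := Finset.mem_image.mp himg
        obtain ⟨rfl, rfl⟩ : J' = J ∧ γ'' = γ := by
          exact ⟨(Prod.ext_iff.mp heq).1, (Prod.ext_iff.mp heq).2⟩
        have hJd : J'.card = d := (Finset.mem_filter.mp hJ').2
        have hγ''2 : γ'' ∈ Γf J' hJd := by
          have htmp : γ'' ∈ if h : J'.card = d then Γf J' h else ∅ := hγ''
          rwa [dif_pos hJd] at htmp
        refine ⟨hJd, hΓ0 J' hJd γ'' hγ''2, ?_⟩
        have h1 : dPlane γ'' J' ⊆ ⋃ γ ∈ Γf J' hJd, dPlane γ J' :=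
          Set.subset_iUnion₂ (s := fun γ _ => dPlane γ J') γ'' hγ''2
        rw [← hΓE J' hJd] at h1
        exact (h1.trans (Eset_subset _ _)).trans (hDsub J')
    rw [hset, Set.ncard_coe_finset]
    have hdisj : ∀ J₁ ∈ JS, ∀ J₂ ∈ JS, J₁ ≠ J₂ →
        Disjoint ((Γ' J₁).image (fun γ => (J₁, γ))) ((Γ' J₂).image (fun γ => (J₂, γ))) := by
      intro J₁ _ J₂ _ hne
      rw [Finset.disjoint_left]
      intro p hp1 hp2
      obtain ⟨γ1, -, h1⟩ := Finset.mem_image.mp hp1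
      obtain ⟨γ2, -, h2⟩ := Finset.mem_image.mp hp2
      exact hne ((Prod.ext_iff.mp (h1.trans h2.symm)).1)
    rw [Finset.card_biUnion hdisj]
    have hcards : ∀ J ∈ JS, ((Γ' J).image (fun γ => (J, γ))).card
        = (Finset.univ.filter (fun c => Jc c = J)).card := by
      intro J hJ
      have hJd : J.card = d := (Finset.mem_filter.mp hJ).2
      rw [Finset.card_image_of_injective _ (fun γ1 γ2 hh => (Prod.ext_iff.mp hh).2)]
      show (if h : J.card = d then Γf J h else ∅).card = _
      rw [dif_pos hJd]
      exact hΓcard J hJd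
    rw [Finset.sum_congr rfl hcards]
    have := Finset.card_eq_sum_card_fiberwise
      (f := Jc) (s := Finset.univ) (t := JS)
      (fun c _ => Finset.mem_filter.mpr ⟨Finset.mem_univ _, (hP c).2.1⟩)
    rw [← this, Finset.card_univ, Fintype.card_fin]
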